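/- Let α ∈ [0,1) and λ ≥ 0. If g : ℝ → ℂ is twice differentiable on (0,∞), satisfies −g''(x) + (α(2+α)/(4x²))·g(x) = λ·g(x) for every x > 0, and is square-integrable on (0,∞) (∫₀^∞ |g(x)|² dx < ∞), then g vanishes identically on (0,∞). (Hence the essential spectrum [0,+∞) of the zero-mode fibre operators contains no embedded eigenvalues.) -/

import Mathlib

open MeasureTheory
open Set

private lemma ftc {F F' : ℝ → ℝ} {a b : ℝ} (hab : a ≤ b)
    (hF : ∀ x ∈ Icc a b, HasDerivAt F (F' x) x)
    (hc : ContinuousOn F' (Icc a b)) :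
    ∫ y in a..b, F' y = F b - F a := by
  apply intervalIntegral.integral_eq_sub_of_hasDerivAt
  · simpa [uIcc_of_le hab] using hF
  · exact (by simpa [uIcc_of_le hab] using hc : ContinuousOn F' (uIcc a b)).intervalIntegrable

private lemma mono_of_deriv {F F' : ℝ → ℝ}
    (hF : ∀ x > (0:ℝ), HasDerivAt F (F' x) x)
    (hc : ContinuousOn F' (Ioi 0))
    (hpos : ∀ x > (0:ℝ), 0 ≤ F' x) {a b : ℝ} (ha : 0 < a) (hab : a ≤ b) :
    F a ≤ F b := by
  have hsub : Icc a b ⊆ Ioi (0:ℝ) := fun x hx => lt_of_lt_of_le ha hx.1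
  have h1 : ∫ y in a..b, F' y = F b - F a :=
    ftc hab (fun x hx => hF x (hsub hx)) (hc.mono hsub)
  have h2 : 0 ≤ ∫ y in a..b, F' y :=
    intervalIntegral.integral_nonneg hab (fun x hx => hpos x (hsub hx))
  linarith

private lemma const_of_deriv_zero {F : ℝ → ℝ}
    (hF : ∀ x > (0:ℝ), HasDerivAt F 0 x) {a b : ℝ} (ha : 0 < a) (hb : 0 < b) :
    F a = F b := by
  have hneg : ∀ x > (0:ℝ), HasDerivAt (fun y => -F y) 0 x := by
    intro x hx; have := (hF x hx).neg; rw [neg_zero] at this; exact this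
  rcases le_total a b with h | h
  · have h1 := mono_of_deriv (F' := fun _ => 0) hF continuousOn_const (fun _ _ => le_refl _) ha h
    have h2 := mono_of_deriv (F' := fun _ => 0) hneg continuousOn_const (fun _ _ => le_refl _) ha h
    simp only [neg_le_neg_iff] at h2
    linarith
  · have h1 := mono_of_deriv (F' := fun _ => 0) hF continuousOn_const (fun _ _ => le_refl _) hb h
    have h2 := mono_of_deriv (F' := fun _ => 0) hneg continuousOn_const (fun _ _ => le_refl _) hb h
    simp only [neg_le_neg_iff] at h2
    linarith

private lemma not_L2_tail {f : ℝ → ℝ} (hf : IntegrableOn f (Ioi 0)) {T : ℝ}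
    (hT : 0 < T) (h1 : ∀ x > T, 1 ≤ f x) : False := by
  have hsub : Ioi T ⊆ Ioi (0:ℝ) := Ioi_subset_Ioi hT.le
  have hfT : IntegrableOn f (Ioi T) := hf.mono_set hsub
  have hconst : IntegrableOn (fun _ : ℝ => (1:ℝ)) (Ioi T) := by
    apply Integrable.mono' hfT aestronglyMeasurable_const
    filter_upwards [ae_restrict_mem measurableSet_Ioi] with x hx
    simpa using h1 x hx
  rw [integrableOn_const_iff] at hconst
  rcases hconst with h | h
  · norm_num at h
  · rw [Real.volume_Ioi] at h; exact (lt_irrefl _ h).elim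

private lemma not_L2_rpow {f : ℝ → ℝ} {t C s : ℝ} (ht : 0 < t) (hC : 0 < C)
    (hs : -1 ≤ s) (hf : IntegrableOn f (Ioi t))
    (h : ∀ x > t, C * x ^ s ≤ f x) : False := by
  have hmeas : AEStronglyMeasurable (fun x : ℝ => C * x ^ s)
      (volume.restrict (Ioi t)) := by
    apply ContinuousOn.aestronglyMeasurable _ measurableSet_Ioi
    intro x hx
    exact (continuousAt_const.mul
      (Real.continuousAt_rpow_const x s (Or.inl (lt_trans ht hx).ne'))).continuousWithinAt
  have hint : IntegrableOn (fun x : ℝ => C * x ^ s) (Ioi t) := by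
    apply Integrable.mono' hf hmeas
    filter_upwards [ae_restrict_mem measurableSet_Ioi] with x hx
    have hxpos : (0:ℝ) < x := lt_trans ht hx
    have : 0 ≤ C * x ^ s := le_of_lt (mul_pos hC (Real.rpow_pos_of_pos hxpos s))
    rw [Real.norm_eq_abs, abs_of_nonneg this]
    exact h x hx
  have : IntegrableOn (fun x : ℝ => x ^ s) (Ioi t) := by
    have := hint.const_mul C⁻¹
    simp only [← mul_assoc, inv_mul_cancel₀ hC.ne', one_mul] at this
    exact this
  rw [integrableOn_Ioi_rpow_iff ht] at this
  linarith

private lemma lam_zero_case (α : ℝ) (hα : α ∈ Ico (0:ℝ) 1) (u v : ℝ → ℝ)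
    (hu : ∀ x > (0:ℝ), HasDerivAt u (v x) x)
    (hv : ∀ x > (0:ℝ), HasDerivAt v (α * (2 + α) / 4 / x ^ 2 * u x) x)
    (hL2 : IntegrableOn (fun x => u x ^ 2) (Ioi 0)) :
    ∀ x > (0:ℝ), u x = 0 := by
  obtain ⟨hα0, hα1⟩ := hα
  set c : ℝ := α * (2 + α) / 4 with hc
  set p : ℝ := 1 + α / 2 with hp
  set q : ℝ := -α / 2 with hq
  -- Wronskian against x^r is constant whenever r(r-1)=c
  have hW : ∀ r : ℝ, r * (r - 1) = c → ∀ x > (0:ℝ),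
      HasDerivAt (fun y => u y * (r * y ^ (r-1)) - v y * y ^ r) 0 x := by
    intro r hr x hx
    have hxne : x ≠ 0 := hx.ne'
    have h1 : HasDerivAt (fun y : ℝ => u y * (r * y ^ (r-1)))
        (v x * (r * x ^ (r-1)) + u x * (r * ((r-1) * x ^ (r-1-1)))) x :=
      (hu x hx).mul ((Real.hasDerivAt_rpow_const (Or.inl hxne)).const_mul r)
    have h2 : HasDerivAt (fun y : ℝ => v y * y ^ r)
        ((c / x ^ 2 * u x) * x ^ r + v x * (r * x ^ (r-1))) x :=
      (hv x hx).mul (Real.hasDerivAt_rpow_const (Or.inl hxne))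
    have h3 := h1.sub h2
    refine h3.congr_deriv ?_
    symm
    have e1 : x ^ (r-1-1) * x ^ 2 = x ^ r := by
      rw [show ((x:ℝ) ^ (2:ℕ) : ℝ) = x ^ ((2:ℕ):ℝ) from (Real.rpow_natCast x 2).symm,
        ← Real.rpow_add hx]
      congr 1; push_cast; ring
    have hx2 : (x:ℝ) ^ 2 ≠ 0 := pow_ne_zero _ hxne
    have key : u x * (r * ((r-1) * x ^ (r-1-1))) = c / x ^ 2 * u x * x ^ r := by
      rw [← hr, ← e1]; field_simp
    rw [key]; ring
  have hpc : p * (p - 1) = c := by rw [hp, hc]; ring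
  have hqc : q * (q - 1) = c := by rw [hq, hc]; ring
  -- constants
  set Wp : ℝ → ℝ := fun y => u y * (p * y ^ (p-1)) - v y * y ^ p with hWp
  set Wq : ℝ → ℝ := fun y => u y * (q * y ^ (q-1)) - v y * y ^ q with hWq
  set A : ℝ := -(Wq 1) / (p - q) with hA
  set B : ℝ := Wp 1 / (p - q) with hB
  have hpq : p - q = 1 + α := by rw [hp, hq]; ring
  have hpqpos : (0:ℝ) < p - q := by rw [hpq]; linarith
  have hrep : ∀ x > (0:ℝ), u x = A * x ^ p + B * x ^ q := by
    intro x hx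
    have e1 : Wp x = Wp 1 := const_of_deriv_zero (hW p hpc) hx one_pos
    have e2 : Wq x = Wq 1 := const_of_deriv_zero (hW q hqc) hx one_pos
    -- combine: u x * (p - q) = Wp 1 * x^q - Wq 1 * x^p  (using x^{p-1}*x^q = 1 etc.)
    have s1 : x ^ (p-1) * x ^ q = 1 := by
      rw [← Real.rpow_add hx, show p - 1 + q = 0 by rw [hp, hq]; ring, Real.rpow_zero]
    have s2 : x ^ (q-1) * x ^ p = 1 := by
      rw [← Real.rpow_add hx, show q - 1 + p = 0 by rw [hp, hq]; ring, Real.rpow_zero]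
    have E1 : u x * (p * x ^ (p-1)) - v x * x ^ p = Wp 1 := e1
    have E2 : u x * (q * x ^ (q-1)) - v x * x ^ q = Wq 1 := e2
    have comb : u x * (p - q) = Wp 1 * x ^ q - Wq 1 * x ^ p := by
      linear_combination x ^ q * E1 - x ^ p * E2 - u x * p * s1 + u x * q * s2
    have hux0 : u x = (Wp 1 * x ^ q - Wq 1 * x ^ p) / (p - q) := by
      rw [eq_div_iff hpqpos.ne']; linear_combination comb
    rw [hux0, hA, hB]; field_simp; ring
  -- A = 0
  have hA0 : A = 0 := by
    by_contra hA0
    have hAabs : 0 < |A| := abs_pos.mpr hA0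
    set X : ℝ := max 1 ((1 + |B|) / |A|) with hX
    have hX1 : (1:ℝ) ≤ X := le_max_left _ _
    have hXpos : (0:ℝ) < X := lt_of_lt_of_le one_pos hX1
    apply not_L2_tail hL2 hXpos
    intro x hx
    have hx1 : (1:ℝ) ≤ x := le_trans hX1 hx.le
    have hxpos : (0:ℝ) < x := lt_of_lt_of_le one_pos hx1
    have hrepx := hrep x hxpos
    have hxp : x ≤ x ^ p := by
      calc x = x ^ (1:ℝ) := (Real.rpow_one x).symm
        _ ≤ x ^ p := Real.rpow_le_rpow_of_exponent_le hx1 (by rw [hp]; linarith)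
    have hxq : x ^ q ≤ 1 := by
      calc x ^ q ≤ x ^ (0:ℝ) := Real.rpow_le_rpow_of_exponent_le hx1 (by rw [hq]; linarith)
        _ = 1 := Real.rpow_zero x
    have hxqpos : (0:ℝ) < x ^ q := Real.rpow_pos_of_pos hxpos q
    have habs : |A| * x ^ p - |B| * x ^ q ≤ |u x| := by
      have : |A * x ^ p| ≤ |u x| + |B * x ^ q| := by
        calc |A * x ^ p| = |u x - B * x ^ q| := by rw [hrepx]; ring_nf
          _ ≤ |u x| + |B * x ^ q| := abs_sub _ _
      rw [abs_mul, abs_mul, abs_of_pos (Real.rpow_pos_of_pos hxpos p),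
        abs_of_pos hxqpos] at this
      linarith
    have hlarge : (1 + |B|) / |A| < x := lt_of_le_of_lt (le_max_right _ _) hx
    have hAx : 1 + |B| < |A| * x := by
      rw [div_lt_iff₀ hAabs] at hlarge; linarith
    have h1u : 1 ≤ |u x| := by
      have b1 : |A| * x ≤ |A| * x ^ p := by
        apply mul_le_mul_of_nonneg_left hxp hAabs.le
      have b2 : |B| * x ^ q ≤ |B| := by
        calc |B| * x ^ q ≤ |B| * 1 := mul_le_mul_of_nonneg_left hxq (abs_nonneg B)
          _ = |B| := mul_one _
      linarith
    nlinarith [abs_nonneg (u x), sq_abs (u x)]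
  -- B = 0
  have hB0 : B = 0 := by
    by_contra hB0
    have hB2 : (0:ℝ) < B ^ 2 := by positivity
    apply not_L2_rpow one_pos hB2 (le_refl (-1)) (hL2.mono_set (Ioi_subset_Ioi zero_le_one))
    intro x hx
    have hxpos : (0:ℝ) < x := lt_trans one_pos hx
    have hrepx := hrep x hxpos
    have h2q : u x ^ 2 = B ^ 2 * x ^ (2 * q) := by
      rw [hrepx, hA0]
      have : (x ^ q) ^ 2 = x ^ (2 * q) := by
        rw [← Real.rpow_natCast (x ^ q) 2, ← Real.rpow_mul hxpos.le]
        norm_num [mul_comm]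
      rw [zero_mul, zero_add, mul_pow, this]
    have hle : x ^ (-1 : ℝ) ≤ x ^ (2 * q) :=
      Real.rpow_le_rpow_of_exponent_le hx.le (by rw [hq]; linarith)
    rw [h2q]
    exact mul_le_mul_of_nonneg_left hle hB2.le
  intro x hx
  rw [hrep x hx, hA0, hB0]; ring

set_option maxHeartbeats 2000000 in
private lemma lam_pos_case (c lam : ℝ) (hc : 0 ≤ c) (hlam : 0 < lam) (u v : ℝ → ℝ)
    (hu : ∀ x > (0:ℝ), HasDerivAt u (v x) x)
    (hv : ∀ x > (0:ℝ), HasDerivAt v ((c / x ^ 2 - lam) * u x) x)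
    (hL2 : IntegrableOn (fun x => u x ^ 2) (Ioi 0)) :
    ∀ x > (0:ℝ), u x = 0 := by
  have hcu : ContinuousOn u (Ioi 0) :=
    fun x hx => (hu x hx).continuousAt.continuousWithinAt
  have hcv : ContinuousOn v (Ioi 0) :=
    fun x hx => (hv x hx).continuousAt.continuousWithinAt
  have hx2ne : ∀ x ∈ Ioi (0:ℝ), (x:ℝ) ^ 2 ≠ 0 := fun x hx => pow_ne_zero _ (ne_of_gt hx)
  have hx3ne : ∀ x ∈ Ioi (0:ℝ), (x:ℝ) ^ 3 ≠ 0 := fun x hx => pow_ne_zero _ (ne_of_gt hx)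
  -- the energy
  set E : ℝ → ℝ := fun x => v x ^ 2 + (lam - c / x ^ 2) * u x ^ 2 with hEdef
  set Ed : ℝ → ℝ := fun x => 2 * c * u x ^ 2 / x ^ 3 with hEddef
  have hE : ∀ x > (0:ℝ), HasDerivAt E (Ed x) x := by
    intro x hx
    have hxne : x ≠ 0 := ne_of_gt hx
    have h1 : HasDerivAt (fun y => v y ^ 2)
        ((2:ℕ) * v x ^ 1 * ((c / x ^ 2 - lam) * u x)) x := (hv x hx).pow 2
    have h2a : HasDerivAt (fun y : ℝ => c / y ^ 2)
        ((0 * x ^ 2 - c * ((2:ℕ) * x ^ 1)) / (x ^ 2) ^ 2) x :=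
      (hasDerivAt_const x c).div (hasDerivAt_pow 2 x) (pow_ne_zero 2 hxne)
    have h2 : HasDerivAt (fun y : ℝ => lam - c / y ^ 2)
        (0 - (0 * x ^ 2 - c * ((2:ℕ) * x ^ 1)) / (x ^ 2) ^ 2) x :=
      (hasDerivAt_const x lam).sub h2a
    have h3 : HasDerivAt (fun y => u y ^ 2) ((2:ℕ) * u x ^ 1 * v x) x := (hu x hx).pow 2
    have h4 := h1.add (h2.mul h3)
    refine h4.congr_deriv ?_
    symm
    simp only [hEddef]
    push_cast
    field_simp
    ring
  have hEdnn : ∀ x > (0:ℝ), 0 ≤ Ed x := by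
    intro x hx
    have : (0:ℝ) < x ^ 3 := by positivity
    apply div_nonneg _ this.le
    positivity
  have hEdcont : ContinuousOn Ed (Ioi 0) := by
    intro x hx
    exact ContinuousAt.continuousWithinAt
      ((continuousAt_const.mul ((hu x hx).continuousAt.pow 2)).div
        ((continuous_pow 3).continuousAt) (hx3ne x hx))

  have Emono : ∀ {a b : ℝ}, 0 < a → a ≤ b → E a ≤ E b :=
    fun ha hab => mono_of_deriv hE hEdcont hEdnn ha hab
  by_cases hEpos : ∃ x₀, 0 < x₀ ∧ 0 < E x₀
  · -- positive energy somewhere : u blows up, contradiction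
    exfalso
    obtain ⟨x₀, hx₀, he₀⟩ := hEpos
    have hM0 : 0 ≤ ∫ x in Ioi x₀, u x ^ 2 :=
      setIntegral_nonneg measurableSet_Ioi (fun x _ => sq_nonneg _)
    set M : ℝ := ∫ x in Ioi x₀, u x ^ 2 with hMdef
    have hMint : IntegrableOn (fun x => u x ^ 2) (Ioi x₀) :=
      hL2.mono_set (Ioi_subset_Ioi hx₀.le)
    set φ : ℝ → ℝ := fun x => u x * v x with hφdef
    set φd : ℝ → ℝ := fun x => v x ^ 2 + (c / x ^ 2 - lam) * u x ^ 2 with hφddef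
    have hφ : ∀ x > (0:ℝ), HasDerivAt φ (φd x) x := by
      intro x hx
      have := (hu x hx).mul (hv x hx)
      refine this.congr_deriv ?_
      symm
      simp only [hφddef]
      ring
    have hφdcont : ContinuousOn φd (Ioi 0) := by
      intro x hx
      exact ContinuousAt.continuousWithinAt
        (((hv x hx).continuousAt.pow 2).add
          (((continuousAt_const.div ((continuous_pow 2).continuousAt) (hx2ne x hx)).sub
            continuousAt_const).mul ((hu x hx).continuousAt.pow 2)))
    have key1 : ∀ T, x₀ ≤ T → φ x₀ + (E x₀ * (T - x₀) - 2 * lam * M) ≤ φ T := by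
      intro T hT
      have hsub : Icc x₀ T ⊆ Ioi (0:ℝ) := fun x hx => lt_of_lt_of_le hx₀ hx.1
      have hftc : ∫ y in x₀..T, φd y = φ T - φ x₀ :=
        ftc hT (fun x hx => hφ x (hsub hx)) (hφdcont.mono hsub)
      have hlow : ∀ x ∈ Icc x₀ T, E x₀ - 2 * lam * u x ^ 2 ≤ φd x := by
        intro x hx
        have hxpos : (0:ℝ) < x := hsub hx
        have hEx : E x₀ ≤ E x := Emono hx₀ hx.1
        have hnn : 0 ≤ c / x ^ 2 * u x ^ 2 :=
          mul_nonneg (div_nonneg hc (sq_nonneg x)) (sq_nonneg _)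
        simp only [hEdef] at hEx
        simp only [hφddef]
        nlinarith [sq_nonneg (u x)]
      have hcu2 : ContinuousOn (fun x => u x ^ 2) (Icc x₀ T) := (hcu.mono hsub).pow 2
      have hint0 : IntervalIntegrable (fun x => u x ^ 2) volume x₀ T := by
        rw [intervalIntegrable_iff_integrableOn_Icc_of_le hT]
        exact hcu2.integrableOn_compact isCompact_Icc
      have hint1 : IntervalIntegrable (fun x => E x₀ - 2 * lam * u x ^ 2) volume x₀ T :=
        intervalIntegrable_const.sub (hint0.const_mul (2 * lam))
      have hint2 : IntervalIntegrable φd volume x₀ T := by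
        rw [intervalIntegrable_iff_integrableOn_Icc_of_le hT]
        exact (hφdcont.mono hsub).integrableOn_compact isCompact_Icc
      have hmono := intervalIntegral.integral_mono_on hT hint1 hint2 hlow
      have hcomp : ∫ x in x₀..T, (E x₀ - 2 * lam * u x ^ 2)
          = E x₀ * (T - x₀) - 2 * lam * ∫ x in x₀..T, u x ^ 2 := by
        rw [intervalIntegral.integral_sub intervalIntegrable_const
          (hint0.const_mul (2 * lam)), intervalIntegral.integral_const,
          intervalIntegral.integral_const_mul]
        simp [smul_eq_mul, mul_comm]
      have hbound : ∫ x in x₀..T, u x ^ 2 ≤ M := by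
        rw [intervalIntegral.integral_of_le hT, hMdef]
        exact setIntegral_mono_set hMint
          (Filter.Eventually.of_forall (fun x => sq_nonneg _))
          (HasSubset.Subset.eventuallyLE Ioc_subset_Ioi_self)
      have h2lam : 0 ≤ 2 * lam := by linarith
      nlinarith [mul_le_mul_of_nonneg_left hbound h2lam]
    set T₁ : ℝ := x₀ + (1 + 2 * lam * M + |φ x₀|) / E x₀ with hT₁def
    have hnum : 0 ≤ 1 + 2 * lam * M + |φ x₀| := by
      have := abs_nonneg (φ x₀)
      nlinarith
    have hT₁x₀ : x₀ ≤ T₁ := by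
      rw [hT₁def]
      nlinarith [div_nonneg hnum he₀.le]
    have hT₁pos : 0 < T₁ := lt_of_lt_of_le hx₀ hT₁x₀
    have hφ1 : ∀ T, T₁ ≤ T → 1 ≤ φ T := by
      intro T hT
      have h1 := key1 T (hT₁x₀.trans hT)
      have h2 : E x₀ * (T₁ - x₀) = 1 + 2 * lam * M + |φ x₀| := by
        rw [hT₁def]
        field_simp
        ring
      have h3 : E x₀ * (T₁ - x₀) ≤ E x₀ * (T - x₀) :=
        mul_le_mul_of_nonneg_left (by linarith) he₀.le
      have h4 := neg_abs_le (φ x₀)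
      linarith
    exfalso
    apply not_L2_tail hL2 (lt_of_lt_of_le hT₁pos (by linarith : T₁ ≤ T₁ + 1))
    intro T hT
    have hTT₁ : T₁ ≤ T := by linarith
    have hsub : Icc T₁ T ⊆ Ioi (0:ℝ) := fun x hx => lt_of_lt_of_le hT₁pos hx.1
    have hsq : ∀ x > (0:ℝ), HasDerivAt (fun y => u y ^ 2) (2 * φ x) x := by
      intro x hx
      have := (hu x hx).pow 2
      refine this.congr_deriv ?_
      symm
      simp only [hφdef]
      push_cast
      ring
    have h2φcont : ContinuousOn (fun x => 2 * φ x) (Ioi 0) := by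
      intro x hx
      exact ContinuousAt.continuousWithinAt
        (continuousAt_const.mul ((hu x hx).continuousAt.mul (hv x hx).continuousAt))
    have hftc : ∫ y in T₁..T, 2 * φ y = u T ^ 2 - u T₁ ^ 2 :=
      ftc hTT₁ (fun x hx => hsq x (hsub hx)) (h2φcont.mono hsub)
    have hint2 : IntervalIntegrable (fun x => 2 * φ x) volume T₁ T := by
      rw [intervalIntegrable_iff_integrableOn_Icc_of_le hTT₁]
      exact (h2φcont.mono hsub).integrableOn_compact isCompact_Icc
    have hmono := intervalIntegral.integral_mono_on hTT₁ intervalIntegrable_const hint2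
      (fun x hx => by
        have := hφ1 x hx.1
        linarith : ∀ x ∈ Icc T₁ T, (2:ℝ) ≤ 2 * φ x)
    rw [intervalIntegral.integral_const, smul_eq_mul, mul_comm] at hmono
    nlinarith [sq_nonneg (u T₁)]
  · -- energy everywhere nonpositive : u ≡ 0
    push_neg at hEpos
    have hEle : ∀ x > (0:ℝ), E x ≤ 0 := hEpos
    set sl : ℝ := Real.sqrt lam with hsldef
    have hslpos : 0 < sl := Real.sqrt_pos.mpr hlam
    have hsl : sl * sl = lam := Real.mul_self_sqrt hlam.le
    set k : ℝ := c / sl with hkdef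
    have hk : 0 ≤ k := div_nonneg hc hslpos.le
    set R : ℝ := Real.sqrt (c / lam) with hRdef
    have hvanish : ∀ x, R < x → 0 < x → u x = 0 ∧ v x = 0 := by
      intro x hRx hxpos
      have hx2 : c / lam < x ^ 2 := by
        have h1 : c / lam = R ^ 2 := (Real.sq_sqrt (div_nonneg hc hlam.le)).symm
        rw [h1]
        exact pow_lt_pow_left₀ hRx (Real.sqrt_nonneg _) two_ne_zero
      have h3 : c < lam * x ^ 2 := by
        rw [div_lt_iff₀ hlam] at hx2; linarith
      have hclam : c / x ^ 2 < lam := by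
        rw [div_lt_iff₀ (pow_pos hxpos 2)]; linarith
      have hEx := hEle x hxpos
      simp only [hEdef] at hEx
      have hterm : 0 ≤ (lam - c / x ^ 2) * u x ^ 2 :=
        mul_nonneg (by linarith) (sq_nonneg _)
      have hu2 : u x ^ 2 = 0 := by
        have hle : (lam - c / x ^ 2) * u x ^ 2 ≤ 0 := by nlinarith [sq_nonneg (v x)]
        have : (lam - c / x ^ 2) * u x ^ 2 = 0 := le_antisymm hle hterm
        have hne : lam - c / x ^ 2 ≠ 0 := by linarith
        exact (mul_eq_zero.mp this).resolve_left hne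
      have hv2 : v x ^ 2 = 0 := by nlinarith [sq_nonneg (v x)]
      exact ⟨(pow_eq_zero_iff two_ne_zero).mp hu2, (pow_eq_zero_iff two_ne_zero).mp hv2⟩
    set G : ℝ → ℝ := fun x => v x ^ 2 + lam * u x ^ 2 with hGdef
    set H : ℝ → ℝ := fun x => G x * Real.exp (-(k / x)) with hHdef
    set Hd : ℝ → ℝ := fun x =>
      Real.exp (-(k / x)) * ((2 * c * (u x * v x) + k * G x) / x ^ 2) with hHddef
    have hHder : ∀ x > (0:ℝ), HasDerivAt H (Hd x) x := by
      intro x hx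
      have hxne : x ≠ 0 := ne_of_gt hx
      have hGder : HasDerivAt G
          ((2:ℕ) * v x ^ 1 * ((c / x ^ 2 - lam) * u x) + lam * ((2:ℕ) * u x ^ 1 * v x)) x :=
        ((hv x hx).pow 2).add (((hu x hx).pow 2).const_mul lam)
      have hdiv : HasDerivAt (fun y : ℝ => k / y) ((0 * x - k * 1) / x ^ 2) x :=
        (hasDerivAt_const x k).div (hasDerivAt_id x) hxne
      have hexp : HasDerivAt (fun y : ℝ => Real.exp (-(k / y)))
          (Real.exp (-(k / x)) * -((0 * x - k * 1) / x ^ 2)) x := hdiv.neg.exp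
      have hH := hGder.mul hexp
      refine hH.congr_deriv ?_
      symm
      simp only [hHddef, hGdef, hkdef]
      push_cast
      field_simp
      ring
    have hHdnn : ∀ x > (0:ℝ), 0 ≤ Hd x := by
      intro x hx
      have hnum : 0 ≤ 2 * c * (u x * v x) + k * G x := by
        have h1 : (2 * c * (u x * v x) + k * G x) * sl = c * (v x + sl * u x) ^ 2 := by
          simp only [hGdef, hkdef]
          field_simp
          linear_combination (-(c * u x ^ 2)) * hsl
        nlinarith [mul_nonneg hc (sq_nonneg (v x + sl * u x))]
      simp only [hHddef]
      exact mul_nonneg (Real.exp_pos _).le (div_nonneg hnum (sq_nonneg x))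
    have hHdcont : ContinuousOn Hd (Ioi 0) := by
      intro x hx
      have hxne : x ≠ 0 := ne_of_gt hx
      have hecont : ContinuousAt (fun y : ℝ => Real.exp (-(k / y))) x :=
        Real.continuous_exp.continuousAt.comp
          ((continuousAt_const.div continuousAt_id hxne).neg)
      have hGcont : ContinuousAt G x :=
        ((hv x hx).continuousAt.pow 2).add
          (continuousAt_const.mul ((hu x hx).continuousAt.pow 2))
      have hncont : ContinuousAt (fun y => 2 * c * (u y * v y) + k * G y) x :=
        (continuousAt_const.mul ((hu x hx).continuousAt.mul (hv x hx).continuousAt)).add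
          (continuousAt_const.mul hGcont)
      exact ContinuousAt.continuousWithinAt
        (hecont.mul (hncont.div ((continuous_pow 2).continuousAt) (hx2ne x hx)))
    have Hmono : ∀ {a b : ℝ}, 0 < a → a ≤ b → H a ≤ H b :=
      fun ha hab => mono_of_deriv hHder hHdcont hHdnn ha hab
    set y : ℝ := max R 0 + 1 with hydef
    have hypos : 0 < y := by
      have := le_max_right R 0
      rw [hydef]; linarith
    have hyR : R < y := by
      have := le_max_left R 0
      rw [hydef]; linarith
    obtain ⟨hyu, hyv⟩ := hvanish y hyR hypos
    have hHy : H y = 0 := by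
      simp [hHdef, hGdef, hyu, hyv]
    have hGnn : ∀ x : ℝ, 0 ≤ G x := by
      intro x
      simp only [hGdef]
      have := mul_nonneg hlam.le (sq_nonneg (u x))
      nlinarith [sq_nonneg (v x)]
    intro x hx
    rcases le_or_gt x y with hxy | hxy
    · have h1 : H x ≤ H y := Hmono hx hxy
      have h2 : 0 ≤ H x := by
        simp only [hHdef]
        exact mul_nonneg (hGnn x) (Real.exp_pos _).le
      have h3 : H x = 0 := le_antisymm (hHy ▸ h1) h2
      have h4 : G x = 0 := by
        simp only [hHdef] at h3
        exact (mul_eq_zero.mp h3).resolve_right (Real.exp_ne_zero _)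
      simp only [hGdef] at h4
      have hu2 : u x ^ 2 = 0 := by nlinarith [sq_nonneg (v x), sq_nonneg (u x)]
      exact (pow_eq_zero_iff two_ne_zero).mp hu2
    · exact (hvanish x (lt_trans hyR hxy) hx).1


private lemma real_case (α lam : ℝ) (hα : α ∈ Ico (0:ℝ) 1) (hlam : 0 ≤ lam)
    (u v : ℝ → ℝ)
    (hu : ∀ x > (0:ℝ), HasDerivAt u (v x) x)
    (hv : ∀ x > (0:ℝ), HasDerivAt v ((α * (2 + α) / 4 / x ^ 2 - lam) * u x) x)
    (hL2 : IntegrableOn (fun x => u x ^ 2) (Ioi 0)) :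
    ∀ x > (0:ℝ), u x = 0 := by
  have hc : 0 ≤ α * (2 + α) / 4 := by nlinarith [hα.1, hα.2]
  rcases hlam.eq_or_lt with h | h
  · subst h
    apply lam_zero_case α hα u v hu _ hL2
    intro x hx
    convert hv x hx using 1
    ring
  · exact lam_pos_case (α * (2 + α) / 4) lam hc h u v hu hv hL2

private lemma comp_case (α lam : ℝ) (hα : α ∈ Ico (0 : ℝ) 1)
    (hlam : 0 ≤ lam) (g : ℝ → ℂ)
    (hdiff : ∀ x > (0 : ℝ), DifferentiableAt ℝ g x ∧ DifferentiableAt ℝ (deriv g) x)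
    (hode : ∀ x > (0 : ℝ),
      -(deriv (deriv g) x) + ((α * (2 + α) / (4 * x ^ 2) : ℝ) : ℂ) * g x
        = (lam : ℂ) * g x)
    (hL2 : IntegrableOn (fun x : ℝ => ‖g x‖ ^ 2) (Set.Ioi 0))
    (l : ℂ →L[ℝ] ℝ) (hbound : ∀ z : ℂ, |l z| ≤ ‖z‖) :
    ∀ x > (0:ℝ), l (g x) = 0 := by
  set u : ℝ → ℝ := fun x => l (g x) with hudef
  set v : ℝ → ℝ := fun x => l (deriv g x) with hvdef
  have hu : ∀ x > (0:ℝ), HasDerivAt u (v x) x := by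
    intro x hx
    exact l.hasFDerivAt.comp_hasDerivAt x (hdiff x hx).1.hasDerivAt
  have hode' : ∀ x > (0:ℝ),
      deriv (deriv g) x = (((α * (2 + α) / (4 * x ^ 2) - lam : ℝ)) : ℂ) * g x := by
    intro x hx
    have h := hode x hx
    rw [Complex.ofReal_sub, sub_mul]
    linear_combination -h
  have hv : ∀ x > (0:ℝ), HasDerivAt v ((α * (2 + α) / 4 / x ^ 2 - lam) * u x) x := by
    intro x hx
    have h2 : HasDerivAt v (l (deriv (deriv g) x)) x :=
      l.hasFDerivAt.comp_hasDerivAt x (hdiff x hx).2.hasDerivAt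
    have h3 : l (deriv (deriv g) x) = (α * (2 + α) / (4 * x ^ 2) - lam) * u x := by
      rw [hode' x hx, ← Complex.real_smul, _root_.map_smul, smul_eq_mul]
    rw [h3] at h2
    convert h2 using 1
    have hxne : x ≠ 0 := ne_of_gt hx
    field_simp
  have hL2u : IntegrableOn (fun x => u x ^ 2) (Ioi 0) := by
    apply Integrable.mono' hL2
    · apply ContinuousOn.aestronglyMeasurable _ measurableSet_Ioi
      intro x hx
      exact (((hu x hx).continuousAt).pow 2).continuousWithinAt
    · filter_upwards with x
      rw [Real.norm_eq_abs, abs_of_nonneg (sq_nonneg _)]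
      have h1 : |u x| ≤ ‖g x‖ := hbound (g x)
      have h2 : u x ^ 2 = |u x| ^ 2 := (sq_abs _).symm
      nlinarith [abs_nonneg (u x), norm_nonneg (g x)]
  exact real_case α lam hα hlam u v hu hv hL2u

/-- no embedded eigenvalues. If `g` is twice differentiable on
`(0,∞)`, solves `−g'' + (α(2+α)/(4x²)) g = λ g` there with `λ ≥ 0`, and is
square-integrable on `(0,∞)`, then `g` vanishes identically on `(0,∞)`. -/
theorem no_embedded_eigenvalues (α lam : ℝ) (hα : α ∈ Set.Ico (0 : ℝ) 1)
    (hlam : 0 ≤ lam) (g : ℝ → ℂ)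
    (hdiff : ∀ x > (0 : ℝ), DifferentiableAt ℝ g x ∧ DifferentiableAt ℝ (deriv g) x)
    (hode : ∀ x > (0 : ℝ),
      -(deriv (deriv g) x) + ((α * (2 + α) / (4 * x ^ 2) : ℝ) : ℂ) * g x
        = (lam : ℂ) * g x)
    (hL2 : IntegrableOn (fun x : ℝ => ‖g x‖ ^ 2) (Set.Ioi 0)) :
    ∀ x > (0 : ℝ), g x = 0 := by

  intro x hx
  have hre := comp_case α lam hα hlam g hdiff hode hL2 Complex.reCLM
    (fun z => by simpa using Complex.abs_re_le_norm z) x hx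
  have him := comp_case α lam hα hlam g hdiff hode hL2 Complex.imCLM
    (fun z => by simpa using Complex.abs_im_le_norm z) x hx
  apply Complex.ext
  · simpa using hre
  · simpa using him
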